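/- Let h be a nonzero complex number and R = ℂ[x₁,x₄]/(x₁², x₄² − x₁x₄), with x₂ = x₄ − x₁. For an integer k set c_k = (∏_{m=1}^{k} (x₂ + m·h))^{-1} if k ≥ 0 and c_k = ∏_{m=k+1}^{0} (x₂ + m·h) if k < 0. For integers e, d ≥ 0 set a_{e,d} = (∏_{m=1}^{e} (x₁ + m·h))^{-2} · (∏_{m=1}^{d} (x₄ + m·h))^{-1} · c_{d−e} ∈ R, and a_{e,d} = 0 if e < 0 or d < 0. Let J = ∑_{e,d≥0} a_{e,d} r₁^{e} r₂^{d} ∈ R[[r₁,r₂]], and let E₁, E₂ : R[[r₁,r₂]] → R[[r₁,r₂]] be the ℂ-linear operators multiplying the coefficient of r₁^{e} r₂^{d} by (x₁ + e·h) and by (x₄ + d·h) respectively. Then (E₂² − E₁E₂)J = r₂·J; equivalently, for all e ≥ 0 and d ≥ 1, a_{e,d}·((x₄+dh)² − (x₁+eh)(x₄+dh)) = a_{e,d−1}. This is the first quantum differential equation D₁J = 0 of the Hirzebruch surface Σ₁, where D₁ = h²∂₂² − h²∂₁∂₂ − r₂. -/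

import Mathlib

/-- The cohomology ring `H^*(Σ₁;ℂ) = ℂ[x₁,x₄]/(x₁², x₄² − x₁x₄)` of the Hirzebruch
surface `Σ₁ = P(O(0) ⊕ O(−1))`. -/
noncomputable abbrev HirzCohomology : Type :=
  MvPolynomial (Fin 2) ℂ ⧸ Ideal.span
    {(MvPolynomial.X 0 : MvPolynomial (Fin 2) ℂ) ^ 2,
      (MvPolynomial.X 1 : MvPolynomial (Fin 2) ℂ) ^ 2 - MvPolynomial.X 0 * MvPolynomial.X 1}

/-- The degree-two generator `x₁`. -/
noncomputable abbrev hirzX1 : HirzCohomology :=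
  Ideal.Quotient.mk _ (MvPolynomial.X 0)

/-- The degree-two generator `x₄`. -/
noncomputable abbrev hirzX4 : HirzCohomology :=
  Ideal.Quotient.mk _ (MvPolynomial.X 1)

/-- The class `x₂ = x₄ − x₁`. -/
noncomputable abbrev hirzX2 : HirzCohomology := hirzX4 - hirzX1

lemma hirz_sq1 : hirzX1 ^ 2 = 0 := by
  rw [← map_pow]
  exact Ideal.Quotient.eq_zero_iff_mem.mpr (Ideal.subset_span (by simp))

lemma hirz_rel : hirzX4 ^ 2 = hirzX1 * hirzX4 := by
  rw [← map_pow, ← map_mul, Ideal.Quotient.eq]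
  exact Ideal.subset_span (by simp)

lemma hirz_X4X2 : hirzX4 * hirzX2 = 0 := by
  show hirzX4 * (hirzX4 - hirzX1) = 0
  linear_combination hirz_rel

lemma hirz_n1 : IsNilpotent hirzX1 := ⟨2, hirz_sq1⟩

lemma hirz_n4 : IsNilpotent hirzX4 :=
  ⟨3, by linear_combination (hirzX4 + hirzX1) * hirz_rel + hirzX4 * hirz_sq1⟩

lemma hirz_n2 : IsNilpotent hirzX2 :=
  (Commute.all _ _).isNilpotent_sub hirz_n4 hirz_n1

lemma hirz_unit {n : HirzCohomology} (hn : IsNilpotent n) {z : ℂ} (hz : z ≠ 0) :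
    IsUnit (n + algebraMap ℂ HirzCohomology z) :=
  add_comm n _ ▸ hn.isUnit_add_left_of_commute
    ((isUnit_iff_ne_zero.mpr hz).map (algebraMap ℂ HirzCohomology)) (Commute.all _ _)

lemma Icc_int_insert_bot {a b : ℤ} (h : a ≤ b) :
    Finset.Icc a b = insert a (Finset.Icc (a + 1) b) := by
  ext m; simp only [Finset.mem_Icc, Finset.mem_insert]; omega

lemma Icc_int_insert_top {a b : ℤ} (h : a ≤ b) :
    Finset.Icc a b = insert b (Finset.Icc a (b - 1)) := by
  ext m; simp only [Finset.mem_Icc, Finset.mem_insert]; omega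

lemma hirz_fac (h a b : ℂ) :
    (hirzX4 + algebraMap ℂ HirzCohomology (b * h)) ^ 2
      - (hirzX1 + algebraMap ℂ HirzCohomology (a * h))
          * (hirzX4 + algebraMap ℂ HirzCohomology (b * h))
    = (hirzX4 + algebraMap ℂ HirzCohomology (b * h))
        * (hirzX2 + algebraMap ℂ HirzCohomology ((b - a) * h)) := by
  rw [show (b - a) * h = b * h - a * h from by ring, map_sub]
  show (hirzX4 + algebraMap ℂ HirzCohomology (b * h)) ^ 2
      - (hirzX1 + algebraMap ℂ HirzCohomology (a * h))
          * (hirzX4 + algebraMap ℂ HirzCohomology (b * h))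
    = (hirzX4 + algebraMap ℂ HirzCohomology (b * h))
        * ((hirzX4 - hirzX1)
          + (algebraMap ℂ HirzCohomology (b * h) - algebraMap ℂ HirzCohomology (a * h)))
  ring

set_option maxHeartbeats 2000000 in
theorem stmt_10 (h : ℂ) (hh : h ≠ 0)
    -- the factors `c_k`
    (c : ℤ → HirzCohomology)
    (hc1 : ∀ k : ℤ, 0 ≤ k → c k =
      Ring.inverse (∏ m ∈ Finset.Icc (1 : ℤ) k,
        (hirzX2 + algebraMap ℂ HirzCohomology ((m : ℂ) * h))))
    (hc2 : ∀ k : ℤ, k < 0 → c k =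
      ∏ m ∈ Finset.Icc (k + 1) (0 : ℤ),
        (hirzX2 + algebraMap ℂ HirzCohomology ((m : ℂ) * h)))
    -- the coefficients `a_{e,d}`, extended by zero to negative indices
    (A : ℤ → ℤ → HirzCohomology)
    (hA : ∀ e d : ℕ, A e d =
      Ring.inverse (∏ k ∈ Finset.range e,
          (hirzX1 + algebraMap ℂ HirzCohomology (((k : ℂ) + 1) * h))) ^ 2 *
        Ring.inverse (∏ k ∈ Finset.range d,
          (hirzX4 + algebraMap ℂ HirzCohomology (((k : ℂ) + 1) * h))) *
        c ((d : ℤ) - (e : ℤ)))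
    (hA0 : ∀ e d : ℤ, e < 0 ∨ d < 0 → A e d = 0)
    -- `J = ∑ a_{e,d} r₁^{e} r₂^{d}`
    (J : MvPowerSeries (Fin 2) HirzCohomology)
    (hJ : ∀ s : Fin 2 →₀ ℕ, MvPowerSeries.coeff s J = A (s 0) (s 1))
    -- the operators `E₁`, `E₂` multiplying the coefficient of `r₁^{e} r₂^{d}`
    -- by `x₁ + e·h` and `x₄ + d·h` respectively
    (E1 E2 : MvPowerSeries (Fin 2) HirzCohomology → MvPowerSeries (Fin 2) HirzCohomology)
    (hE1 : ∀ F s, MvPowerSeries.coeff s (E1 F) =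
      (hirzX1 + algebraMap ℂ HirzCohomology ((s 0 : ℂ) * h)) *
        MvPowerSeries.coeff s F)
    (hE2 : ∀ F s, MvPowerSeries.coeff s (E2 F) =
      (hirzX4 + algebraMap ℂ HirzCohomology ((s 1 : ℂ) * h)) *
        MvPowerSeries.coeff s F) :
    -- `(E₂² − E₁E₂) J = r₂ J`
    E2 (E2 J) - E1 (E2 J) = MvPowerSeries.X 1 * J ∧
    -- equivalently, the coefficient recursion
    ∀ e d : ℤ, 0 ≤ e → 1 ≤ d →
      A e d *
        ((hirzX4 + algebraMap ℂ HirzCohomology ((d : ℂ) * h)) ^ 2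
          - (hirzX1 + algebraMap ℂ HirzCohomology ((e : ℂ) * h))
              * (hirzX4 + algebraMap ℂ HirzCohomology ((d : ℂ) * h)))
        = A e (d - 1) := by
  -- step identity for `c`
  have cstep : ∀ k : ℤ,
      c k * (hirzX2 + algebraMap ℂ HirzCohomology ((k : ℂ) * h)) = c (k - 1) := by
    intro k
    rcases lt_trichotomy k 0 with hk | hk | hk
    · rw [hc2 k hk, hc2 (k - 1) (by omega), show k - 1 + 1 = k from by ring,
        Icc_int_insert_bot (by omega : k ≤ (0 : ℤ)),
        Finset.prod_insert (by simp)]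
      ring
    · subst hk
      rw [hc1 0 le_rfl, hc2 (0 - 1) (by norm_num), show (0 : ℤ) - 1 + 1 = 0 from by ring]
      simp [Finset.Icc_eq_empty_of_lt, Ring.inverse_one]
    · have hu : IsUnit (hirzX2 + algebraMap ℂ HirzCohomology ((k : ℂ) * h)) :=
        hirz_unit hirz_n2 (mul_ne_zero (Int.cast_ne_zero.mpr (by omega)) hh)
      rw [hc1 k (by omega), hc1 (k - 1) (by omega),
        Icc_int_insert_top (by omega : (1 : ℤ) ≤ k),
        Finset.prod_insert (by simp), Ring.mul_inverse_rev, mul_right_comm, mul_assoc,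
        Ring.mul_inverse_cancel _ hu, mul_one]
  -- `x₄ · c k = 0` for `k < 0`
  have X4c : ∀ k : ℤ, k < 0 → hirzX4 * c k = 0 := by
    intro k hk
    rw [hc2 k hk, Icc_int_insert_top (by omega : k + 1 ≤ (0 : ℤ)),
      Finset.prod_insert (by simp), ← mul_assoc]
    norm_num [hirz_X4X2]
  -- step identity for the `x₄`-product inverses
  have Qstep : ∀ d : ℕ,
      Ring.inverse (∏ k ∈ Finset.range (d + 1),
          (hirzX4 + algebraMap ℂ HirzCohomology (((k : ℂ) + 1) * h))) *
        (hirzX4 + algebraMap ℂ HirzCohomology (((d : ℂ) + 1) * h)) =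
      Ring.inverse (∏ k ∈ Finset.range d,
          (hirzX4 + algebraMap ℂ HirzCohomology (((k : ℂ) + 1) * h))) := by
    intro d
    have hne : ((d : ℂ) + 1) ≠ 0 := by
      have : ((d + 1 : ℕ) : ℂ) ≠ 0 := Nat.cast_ne_zero.mpr (Nat.succ_ne_zero d)
      push_cast at this; exact this
    rw [Finset.prod_range_succ, Ring.mul_inverse_rev, mul_right_comm,
      Ring.inverse_mul_cancel _ (hirz_unit hirz_n4 (mul_ne_zero hne hh)), one_mul]
  -- the key recursion, natural-number version
  have keyS : ∀ e d : ℕ,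
      A e ((d : ℤ) + 1) *
        ((hirzX4 + algebraMap ℂ HirzCohomology (((d : ℂ) + 1) * h)) *
          (hirzX2 + algebraMap ℂ HirzCohomology ((((d : ℂ) + 1) - (e : ℂ)) * h))) =
      A e d := by
    intro e d
    have hA1 := hA e (d + 1); rw [Nat.cast_add, Nat.cast_one] at hA1
    have hA2 := hA e d
    have h2 := cstep ((d : ℤ) + 1 - (e : ℤ))
    rw [show (((((d : ℤ) + 1 - (e : ℤ)) : ℤ)) : ℂ) = ((d : ℂ) + 1) - (e : ℂ) from by
          push_cast; ring,
        show (d : ℤ) + 1 - (e : ℤ) - 1 = (d : ℤ) - (e : ℤ) from by ring] at h2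
    have h1 := Qstep d
    calc A e ((d : ℤ) + 1) *
        ((hirzX4 + algebraMap ℂ HirzCohomology (((d : ℂ) + 1) * h)) *
          (hirzX2 + algebraMap ℂ HirzCohomology ((((d : ℂ) + 1) - (e : ℂ)) * h)))
        = Ring.inverse (∏ k ∈ Finset.range e,
              (hirzX1 + algebraMap ℂ HirzCohomology (((k : ℂ) + 1) * h))) ^ 2 *
          ((Ring.inverse (∏ k ∈ Finset.range (d + 1),
              (hirzX4 + algebraMap ℂ HirzCohomology (((k : ℂ) + 1) * h))) *
            (hirzX4 + algebraMap ℂ HirzCohomology (((d : ℂ) + 1) * h))) *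
          (c ((d : ℤ) + 1 - (e : ℤ)) *
            (hirzX2 + algebraMap ℂ HirzCohomology ((((d : ℂ) + 1) - (e : ℂ)) * h)))) := by
          rw [hA1]; ring
      _ = Ring.inverse (∏ k ∈ Finset.range e,
              (hirzX1 + algebraMap ℂ HirzCohomology (((k : ℂ) + 1) * h))) ^ 2 *
          (Ring.inverse (∏ k ∈ Finset.range d,
              (hirzX4 + algebraMap ℂ HirzCohomology (((k : ℂ) + 1) * h))) *
            c ((d : ℤ) - (e : ℤ))) := by rw [h1, h2]
      _ = A e d := by rw [hA2]; ring
  -- the `d = 0` degenerate case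
  have key0 : ∀ e : ℕ,
      A e 0 *
        ((hirzX4 + algebraMap ℂ HirzCohomology ((0 : ℂ) * h)) *
          (hirzX2 + algebraMap ℂ HirzCohomology (((0 : ℂ) - (e : ℂ)) * h))) = 0 := by
    intro e
    have hA1 := hA e 0; rw [Nat.cast_zero] at hA1
    have h2 := cstep (0 - (e : ℤ))
    rw [show ((((0 : ℤ) - (e : ℤ)) : ℤ) : ℂ) = ((0 : ℂ) - (e : ℂ)) from by push_cast; ring] at h2
    have h3 : hirzX4 * c (0 - (e : ℤ) - 1) = 0 := X4c _ (by omega)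
    simp only [zero_mul, map_zero, add_zero]
    calc A e 0 *
        (hirzX4 * (hirzX2 + algebraMap ℂ HirzCohomology (((0 : ℂ) - (e : ℂ)) * h)))
        = Ring.inverse (∏ k ∈ Finset.range e,
              (hirzX1 + algebraMap ℂ HirzCohomology (((k : ℂ) + 1) * h))) ^ 2 *
          Ring.inverse (∏ k ∈ Finset.range 0,
              (hirzX4 + algebraMap ℂ HirzCohomology (((k : ℂ) + 1) * h))) *
          (hirzX4 * (c ((0 : ℤ) - (e : ℤ)) *
            (hirzX2 + algebraMap ℂ HirzCohomology (((0 : ℂ) - (e : ℂ)) * h)))) := by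
          rw [hA1]; ring
      _ = 0 := by rw [h2, h3]; ring
  constructor
  · -- the power series identity
    apply MvPowerSeries.ext
    intro s
    classical
    simp only [map_sub, hE2, hE1, hJ, MvPowerSeries.X_def, MvPowerSeries.coeff_monomial_mul]
    rcases hd : s 1 with _ | d
    · rw [if_neg (by simp [Finsupp.single_le_iff, hd])]
      simp only [hd, Nat.cast_zero]
      linear_combination (A ((s 0 : ℕ) : ℤ) 0) * hirz_fac h ((s 0 : ℕ) : ℂ) 0 + key0 (s 0)
    · rw [if_pos (by simp [Finsupp.single_le_iff, hd])]
      have hsub0 : (s - Finsupp.single (1 : Fin 2) (1 : ℕ)) 0 = s 0 := by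
        rw [Finsupp.tsub_apply, Finsupp.single_apply]
        norm_num
      have hsub1 : (s - Finsupp.single (1 : Fin 2) (1 : ℕ)) 1 = d := by
        rw [Finsupp.tsub_apply, Finsupp.single_apply, hd]
        norm_num
      rw [hsub0, hsub1, one_mul]
      simp only [hd, Nat.cast_add, Nat.cast_one, Nat.cast_succ]
      linear_combination (A ((s 0 : ℕ) : ℤ) ((d : ℤ) + 1)) *
          hirz_fac h ((s 0 : ℕ) : ℂ) ((d : ℂ) + 1) + keyS (s 0) d
  · -- the coefficient recursion
    intro e d he hd
    lift e to ℕ using he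
    lift d to ℕ using (by omega : (0 : ℤ) ≤ d)
    have hd' : 1 ≤ d := by exact_mod_cast hd
    obtain ⟨d, rfl⟩ : ∃ d', d = d' + 1 := ⟨d - 1, by omega⟩
    simp only [Nat.cast_add, Nat.cast_one, Int.cast_natCast, Int.cast_add, Int.cast_one]
    rw [show ((d : ℤ) + 1) - 1 = ((d : ℕ) : ℤ) from by ring]
    rw [hirz_fac h (e : ℂ) ((d : ℂ) + 1)]
    exact keyS e d
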